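/- Let A ∈ ℤ^{m×n}, b ∈ ℤ^m, c ∈ ℤ^n, u ∈ ℤ^n_{≥0}, and let P = {x ∈ ℝ^n : Ax = b, 0 ≤ x ≤ u}. Let x* ∈ P satisfy c^T x* ≥ c^T x for all x ∈ P, let z ∈ P ∩ ℤ^n, and let y ∈ ℤ^n be a cycle of z − x*. Then c^T y ≤ 0. -/
import Mathlib


open Matrix

/-- If `x*` is an optimal solution of the LP relaxation, `z ∈ P ∩ ℤ^n`, and `y` is a cycle of
`z − x*` (i.e. `Ay = 0`, `|y_i| ≤ |(z − x*)_i|` and `y_i·(z − x*)_i ≥ 0` for all `i`),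
then `cᵀy ≤ 0`. -/
theorem cycle_has_nonpositive_weight
    (m n : ℕ)
    (A : Matrix (Fin m) (Fin n) ℤ) (b : Fin m → ℤ) (c : Fin n → ℤ)
    (u : Fin n → ℤ) (hu : ∀ i, 0 ≤ u i)
    (P : Set (Fin n → ℝ))
    (hP : P = {x : Fin n → ℝ |
      (Matrix.mulVec (fun i j => (A i j : ℝ)) x = fun i => (b i : ℝ)) ∧
      ∀ i, 0 ≤ x i ∧ x i ≤ (u i : ℝ)})
    (xstar : Fin n → ℝ) (hxP : xstar ∈ P)
    (hx_opt : ∀ x ∈ P, ∑ i, (c i : ℝ) * x i ≤ ∑ i, (c i : ℝ) * xstar i)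
    (z : Fin n → ℤ) (hzP : (fun i => (z i : ℝ)) ∈ P)
    (y : Fin n → ℤ)
    (hAy : A.mulVec y = 0)
    (hy1 : ∀ i, |(y i : ℝ)| ≤ |(z i : ℝ) - xstar i|)
    (hy2 : ∀ i, 0 ≤ (y i : ℝ) * ((z i : ℝ) - xstar i)) :
    c ⬝ᵥ y ≤ 0 := by
  subst hP
  obtain ⟨hAx, hbnd⟩ := hxP
  obtain ⟨hAz, hzbnd⟩ := hzP
  -- x* + y is feasible
  set w : Fin n → ℝ := fun i => xstar i + (y i : ℝ) with hw
  have hbounds : ∀ i, 0 ≤ w i ∧ w i ≤ (u i : ℝ) := by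
    intro i
    have h1 := hy1 i
    have h2 := hy2 i
    have hx := hbnd i
    have hz := hzbnd i
    simp only [hw]
    rcases lt_trichotomy ((y i : ℝ)) 0 with hlt | heq | hgt
    · have hneg : (z i : ℝ) - xstar i ≤ 0 := by nlinarith
      have : |(z i : ℝ) - xstar i| = -((z i : ℝ) - xstar i) := abs_of_nonpos hneg
      rw [this, abs_of_neg hlt] at h1
      constructor
      · linarith [hz.1]
      · linarith [hx.2]
    · rw [heq]; constructor <;> simp [hx.1, hx.2]
    · have hpos : 0 ≤ (z i : ℝ) - xstar i := by nlinarith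
      have : |(z i : ℝ) - xstar i| = (z i : ℝ) - xstar i := abs_of_nonneg hpos
      rw [this, abs_of_pos hgt] at h1
      constructor
      · linarith [hx.1]
      · linarith [hz.2]
  have hAw : Matrix.mulVec (fun i j => (A i j : ℝ)) w = fun i => (b i : ℝ) := by
    funext i
    have hAyi : ((A.mulVec y) i : ℝ) = 0 := by rw [hAy]; simp
    have : Matrix.mulVec (fun i j => (A i j : ℝ)) w i
        = Matrix.mulVec (fun i j => (A i j : ℝ)) xstar i + ((A.mulVec y) i : ℝ) := by
      simp only [Matrix.mulVec, dotProduct, hw]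
      push_cast
      rw [← Finset.sum_add_distrib]
      congr 1; funext j; ring
    rw [this, hAyi, hAx]
    simp
  have hwP : w ∈ {x : Fin n → ℝ |
      (Matrix.mulVec (fun i j => (A i j : ℝ)) x = fun i => (b i : ℝ)) ∧
      ∀ i, 0 ≤ x i ∧ x i ≤ (u i : ℝ)} := ⟨hAw, hbounds⟩
  have hopt := hx_opt w hwP
  have hreal : (∑ i, (c i : ℝ) * (y i : ℝ)) ≤ 0 := by
    have : ∑ i, (c i : ℝ) * w i = ∑ i, (c i : ℝ) * xstar i + ∑ i, (c i : ℝ) * (y i : ℝ) := by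
      simp only [hw]
      rw [← Finset.sum_add_distrib]
      congr 1; funext j; ring
    linarith [hopt, this ▸ hopt]
  have : ((c ⬝ᵥ y : ℤ) : ℝ) ≤ 0 := by
    simpa [dotProduct] using hreal
  exact_mod_cast this
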